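/- If P is a finite poc-set and u, v, w are vertices of Γ(P), then m = (u ∩ v) ∪ (v ∩ w) ∪ (u ∩ w) is again a vertex of Γ(P) (i.e., a coherent *-selection). -/
import Mathlib


structure PocSet (P : Type*) [PartialOrder P] where
  zero : P
  zero_le : ∀ a : P, zero ≤ a
  star : P → P
  star_star : ∀ a : P, star (star a) = a
  star_anti : ∀ a b : P, a ≤ b → star b ≤ star a
  eq_zero_of_le_star : ∀ a : P, a ≤ star a → a = zero

namespace PocSet

variable {P : Type*} [PartialOrder P]

/-- The maximum element `1 = 0*` of a poc-set. -/
def one (S : PocSet P) : P := S.star S.zero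

/-- An element is proper if it is neither `0` nor `1`. -/
def Proper (S : PocSet P) (a : P) : Prop := a ≠ S.zero ∧ a ≠ S.one

/-- A subset is coherent if `a ≤ b*` holds for no two of its members. -/
def Coherent (S : PocSet P) (α : Set P) : Prop := ∀ a ∈ α, ∀ b ∈ α, ¬ a ≤ S.star b

/-- A vertex of `Γ(P)`: a coherent `*`-selection. -/
def IsVertex (S : PocSet P) (α : Set P) : Prop :=
  S.Coherent α ∧ ∀ a : P, a ∈ α ↔ S.star a ∉ α

/-- The metric `Δ(u,v) = |u Δ v| / 2` on vertices. -/
noncomputable def delta (S : PocSet P) (u v : Set P) : ℝ :=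
  ((symmDiff u v).ncard : ℝ) / 2

/-- The median of three sets. -/
def med (u v w : Set P) : Set P := (u ∩ v) ∪ (v ∩ w) ∪ (u ∩ w)

end PocSet

/-- A morphism of poc-sets: sends `0` to `0`, preserves order, commutes with `*`. -/
def IsPocMorphism {P Q : Type*} [PartialOrder P] [PartialOrder Q]
    (S : PocSet P) (T : PocSet Q) (f : P → Q) : Prop :=
  f S.zero = T.zero ∧ (∀ a b : P, a ≤ b → f a ≤ f b) ∧ ∀ a : P, f (S.star a) = T.star (f a)

theorem stmt6 {P : Type*} [PartialOrder P] [Finite P] (S : PocSet P)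
    (u v w : Set P) (hu : S.IsVertex u) (hv : S.IsVertex v) (hw : S.IsVertex w) :
    S.IsVertex (PocSet.med u v w) := by
  constructor
  · intro a ha b hb hle
    simp only [PocSet.med, Set.mem_union, Set.mem_inter_iff] at ha hb
    rcases ha with (⟨h1, h2⟩ | ⟨h1, h2⟩) | ⟨h1, h2⟩ <;>
      rcases hb with (⟨g1, g2⟩ | ⟨g1, g2⟩) | ⟨g1, g2⟩ <;>
      first
        | exact hu.1 a (by assumption) b (by assumption) hle
        | exact hv.1 a (by assumption) b (by assumption) hle
        | exact hw.1 a (by assumption) b (by assumption) hle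
  · intro a
    have h1 := hu.2 a
    have h2 := hv.2 a
    have h3 := hw.2 a
    simp only [PocSet.med, Set.mem_union, Set.mem_inter_iff]
    tauto
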